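/- arXiv:2210.06862 — 9 statements merged into one kernel-verified Lean document; each statement's English description precedes it below -/
import Mathlib

section
/- For every k ∈ ℤ/nℤ, the matrices B_k satisfy the braid relation B_k · B_{k+1} · B_k = B_{k+1} · B_k · B_{k+1} (matrix multiplication, indices taken modulo n). -/
/-- The matrix `ρ(σ_k)`: agrees with the identity outside rows/columns `k, k+1`,
with block `[[1-t, t],[1, 0]]` in rows/columns `k, k+1` (indices in `ZMod n`). -/
def Bmat (n : ℕ) (R : Type*) [CommRing R] (t : Rˣ) (k : ZMod n) :
    Matrix (ZMod n) (ZMod n) R := fun i j =>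
  if i = k ∧ j = k then 1 - (t : R)
  else if i = k ∧ j = k + 1 then (t : R)
  else if i = k + 1 ∧ j = k then 1
  else if i = k + 1 ∧ j = k + 1 then 0
  else if i = j then 1 else 0

/-- The matrix `ρ(τ_k)`: agrees with the identity outside rows/columns `k, k+1`,
with block `[[0, s],[s⁻¹, 0]]` in rows/columns `k, k+1` (indices in `ZMod n`). -/
def Tmat (n : ℕ) (R : Type*) [CommRing R] (s : Rˣ) (k : ZMod n) :
    Matrix (ZMod n) (ZMod n) R := fun i j =>
  if i = k ∧ j = k then 0
  else if i = k ∧ j = k + 1 then (s : R)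
  else if i = k + 1 ∧ j = k then ((s⁻¹ : Rˣ) : R)
  else if i = k + 1 ∧ j = k + 1 then 0
  else if i = j then 1 else 0

lemma Bmat_mul_apply (n : ℕ) (R : Type*) [CommRing R] [NeZero n] (t : Rˣ) (k : ZMod n)
    (hk : k ≠ k + 1) (M : Matrix (ZMod n) (ZMod n) R) (i j : ZMod n) :
    (Bmat n R t k * M) i j =
      if i = k then (1 - (t:R)) * M k j + (t:R) * M (k+1) j
      else if i = k + 1 then M k j
      else M i j := by
  have h10 : (1:ZMod n) ≠ 0 := fun h => hk (by rw [h, add_zero])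
  rw [Matrix.mul_apply]
  by_cases hi : i = k
  · subst hi
    simp only [if_pos rfl]
    have h : ∀ x : ZMod n, Bmat n R t i i = Bmat n R t i i := fun _ => rfl
    rw [show (∑ x, Bmat n R t i i x * M x j)
        = ∑ x, ((if x = i then (1 - (t:R)) * M i j else 0)
            + (if x = i + 1 then (t:R) * M (i+1) j else 0)) from
      Finset.sum_congr rfl fun x _ => by
        simp only [Bmat]
        by_cases h1 : x = i
        · subst h1; simp [hk.symm, Ne.symm hk, h10]
        · by_cases h2 : x = i + 1
          · subst h2; simp [hk, Ne.symm hk, h1]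
          · simp [h1, h2, Ne.symm h1]]
    rw [Finset.sum_add_distrib]
    simp
  · by_cases hi' : i = k + 1
    · subst hi'
      simp only [hi, if_neg, if_pos rfl]
      rw [show (∑ x, Bmat n R t k (k+1) x * M x j)
          = ∑ x, (if x = k then M k j else 0) from
        Finset.sum_congr rfl fun x _ => by
          simp only [Bmat]
          by_cases h1 : x = k
          · subst h1; simp [hk, Ne.symm hk]
          · by_cases h2 : x = k + 1
            · subst h2; simp [hk, Ne.symm hk, h1]
            · simp [h1, h2, hi, Ne.symm h2]]
      simp
    · simp only [hi, hi', if_neg, if_false]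
      rw [show (∑ x, Bmat n R t k i x * M x j)
          = ∑ x, (if x = i then M i j else 0) from
        Finset.sum_congr rfl fun x _ => by
          simp only [Bmat]
          by_cases h1 : x = i
          · subst h1; simp [hi, hi']
          · simp [h1, hi, hi', Ne.symm h1]]
      simp

set_option maxHeartbeats 1000000 in
set_option maxRecDepth 8000 in
theorem stmt_0 (n : ℕ) [NeZero n] (hn : 3 ≤ n) (R : Type*) [CommRing R] (t : Rˣ)
    (k : ZMod n) :
    Bmat n R t k * Bmat n R t (k + 1) * Bmat n R t k =
      Bmat n R t (k + 1) * Bmat n R t k * Bmat n R t (k + 1) := by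
  have h1 : (1 : ZMod n) ≠ 0 := by
    intro h
    have h' : ((1:ℕ) : ZMod n) = 0 := by rw [Nat.cast_one]; exact h
    rw [ZMod.natCast_eq_zero_iff] at h'
    have := Nat.le_of_dvd one_pos h'; omega
  have h2 : (2 : ZMod n) ≠ 0 := by
    intro h
    have h' : ((2:ℕ) : ZMod n) = 0 := by rw [Nat.cast_two]; exact h
    rw [ZMod.natCast_eq_zero_iff] at h'
    have := Nat.le_of_dvd two_pos h'; omega
  have hk1 : k ≠ k + 1 := fun h => h1 (by linear_combination k - h)
  have hk2 : k + 1 ≠ k + 1 + 1 := fun h => h1 (by linear_combination (k+1) - h)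
  have hk3 : k ≠ k + 1 + 1 := fun h => h2 (by linear_combination k - h)
  ext i j
  rw [mul_assoc, mul_assoc]
  simp only [Bmat_mul_apply n R t k hk1, Bmat_mul_apply n R t (k+1) hk2]
  by_cases hj1 : j = k <;> by_cases hj2 : j = k + 1 <;> by_cases hj3 : j = k + 1 + 1 <;>
    (try (exfalso; subst_vars; first | contradiction | exact absurd rfl (by assumption))) <;>
    simp_all [Bmat, hk1, hk2, hk3, hk1.symm, hk2.symm, hk3.symm] <;>
    split_ifs <;>
    first
      | rfl
      | ring1
      | (exfalso;
         have hA : k ≠ k + 1 := fun h => h1 (by linear_combination k - h);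
         have hB : k + 1 ≠ k + 1 + 1 := fun h => h1 (by linear_combination (k+1) - h);
         have hC : k ≠ k + 1 + 1 := fun h => h2 (by linear_combination k - h);
         subst_vars; first | contradiction | exact absurd rfl (by assumption))
end

section
/- For every k ∈ ℤ/nℤ, the matrices T_k satisfy the braid relation T_k · T_{k+1} · T_k = T_{k+1} · T_k · T_{k+1} (indices taken modulo n). -/
section aux
variable (n : ℕ) (R : Type*) [CommRing R] (s : Rˣ)

/-- The diagonal coefficient function of the monomial matrix `Tmat`. -/
def cc (k i : ZMod n) : R :=
  if i = k then (s : R) else if i = k + 1 then ((s⁻¹ : Rˣ) : R) else 1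

lemma Tmat_eq (k : ZMod n) (h : k + 1 ≠ k) :
    Tmat n R s k = Matrix.of fun i j =>
      cc n R s k i * (if Equiv.swap k (k + 1) i = j then 1 else 0) := by
  funext i j
  rcases eq_or_ne i k with rfl | hik
  · rcases eq_or_ne j i with rfl | hjk
    · simp [Tmat, cc, h]
    · rcases eq_or_ne j (i + 1) with rfl | hj1
      · simp [Tmat, cc, h, hjk]
      · simp [Tmat, cc, h, hjk, hj1, Ne.symm hjk, Ne.symm hj1]
  · rcases eq_or_ne i (k + 1) with rfl | hi1
    · rcases eq_or_ne j k with rfl | hjk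
      · simp [Tmat, cc, h, hik]
      · rcases eq_or_ne j (k + 1) with rfl | hj1
        · simp [Tmat, cc, h, hik, hjk, Ne.symm hjk]
        · simp [Tmat, cc, h, hik, hjk, hj1, Ne.symm hjk, Ne.symm hj1]
    · simp [Tmat, cc, hik, hi1, Equiv.swap_apply_of_ne_of_ne hik hi1]

lemma monomul [NeZero n] (c d : ZMod n → R) (e f : ZMod n → ZMod n) :
    (Matrix.of fun i j => c i * (if e i = j then 1 else 0)) *
      (Matrix.of fun i j => d i * (if f i = j then 1 else 0))
    = Matrix.of fun i j => (c i * d (e i)) * (if f (e i) = j then 1 else 0) := by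
  funext i j
  simp only [Matrix.mul_apply, Matrix.of_apply, ite_mul, mul_ite, mul_one, mul_zero, zero_mul]
  rw [Finset.sum_eq_single (e i)]
  · simp [mul_assoc]
  · intro b _ hb; simp [Ne.symm hb]
  · simp

end aux

theorem stmt_3 (n : ℕ) [NeZero n] (hn : 3 ≤ n) (R : Type*) [CommRing R] (s : Rˣ)
    (k : ZMod n) :
    Tmat n R s k * Tmat n R s (k + 1) * Tmat n R s k =
      Tmat n R s (k + 1) * Tmat n R s k * Tmat n R s (k + 1) := by
  have h1 : ∀ m : ZMod n, m + 1 ≠ m := by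
    intro m hm
    have h10 : (1 : ZMod n) = 0 := by
      have := congrArg (· - m) hm; simpa using this
    have : ((1 : ℕ) : ZMod n) = 0 := by simpa using h10
    have := (ZMod.natCast_eq_zero_iff 1 n).mp this
    have := Nat.le_of_dvd one_pos this
    omega
  have h2 : ∀ m : ZMod n, m + 1 + 1 ≠ m := by
    intro m hm
    have h20 : (2 : ZMod n) = 0 := by
      have := congrArg (· - m) hm; simp at this; linear_combination this
    have : ((2 : ℕ) : ZMod n) = 0 := by push_cast; exact h20
    have := (ZMod.natCast_eq_zero_iff 2 n).mp this
    have := Nat.le_of_dvd two_pos this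
    omega
  have hk1 : k + 1 ≠ k := h1 k
  have hk21 : k + 1 + 1 ≠ k + 1 := h1 (k + 1)
  have hk2 : k + 1 + 1 ≠ k := h2 k
  rw [Tmat_eq n R s k hk1, Tmat_eq n R s (k + 1) hk21, monomul, monomul, monomul, monomul]
  funext i j
  simp only [Matrix.of_apply]
  rcases eq_or_ne i k with rfl | hik
  · simp [cc, Equiv.swap_apply_left, Equiv.swap_apply_right,
      Equiv.swap_apply_of_ne_of_ne, hk1, hk2, hk21, Ne.symm hk1, Ne.symm hk2, Ne.symm hk21]
  · rcases eq_or_ne i (k + 1) with rfl | hi1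
    · simp [cc, Equiv.swap_apply_left, Equiv.swap_apply_right,
        Equiv.swap_apply_of_ne_of_ne, hk1, hk2, hk21, Ne.symm hk1, Ne.symm hk2, Ne.symm hk21]
    · rcases eq_or_ne i (k + 1 + 1) with rfl | hi2
      · simp [cc, Equiv.swap_apply_left, Equiv.swap_apply_right,
          Equiv.swap_apply_of_ne_of_ne, hk1, hk2, hk21, Ne.symm hk1, Ne.symm hk2, Ne.symm hk21]
      · simp [cc, hik, hi1, hi2, Equiv.swap_apply_of_ne_of_ne hik hi1,
          Equiv.swap_apply_of_ne_of_ne hi1 hi2]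
end

section
/- For every k ∈ ℤ/nℤ, the mixed (detour) relation T_k · T_{k+1} · B_k · T_{k+1} · T_k = B_{k+1} holds (indices taken modulo n). -/
section
variable {n : ℕ} {R : Type*} [CommRing R] (s : Rˣ)

lemma Tmat_apply_eq (k : ZMod n) (hk : k + 1 ≠ k) (i j : ZMod n) :
    Tmat n R s k i j = if j = Equiv.swap k (k+1) i then
      (if i = k then (s : R) else if i = k + 1 then ((s⁻¹ : Rˣ) : R) else 1) else 0 := by
  have h10 : (1 : ZMod n) ≠ 0 := by
    intro h; apply hk; rw [show (1:ZMod n) = 0 from h, add_zero]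
  have hk' := hk.symm
  rcases eq_or_ne i k with h1 | h1
  · rw [h1, Equiv.swap_apply_left]
    rcases eq_or_ne j k with hj | hj
    · simp [Tmat, hj, hk, hk', h10]
    · rcases eq_or_ne j (k+1) with hj2 | hj2
      · simp [Tmat, hj, hj2, hk, hk', h10]
      · simp [Tmat, hj, hj2, hj.symm, hj2.symm, hk, hk', h10]
  · rcases eq_or_ne i (k+1) with h2 | h2
    · rw [h2, Equiv.swap_apply_right]
      rcases eq_or_ne j k with hj | hj
      · simp [Tmat, hj, hk, hk', h10]
      · rcases eq_or_ne j (k+1) with hj2 | hj2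
        · simp [Tmat, hj, hj2, hk, hk', h10]
        · simp [Tmat, hj, hj2, hj.symm, hj2.symm, hk, hk', h10]
    · rw [Equiv.swap_apply_of_ne_of_ne h1 h2]
      rcases eq_or_ne j i with hj | hj
      · simp [Tmat, hj, h1, h2, hk, hk', h10]
      · simp [Tmat, hj, hj.symm, h1, h2, hk, hk', h10, eq_comm (a := i) (b := j)]

variable [NeZero n]

lemma Tmat_mul_apply (k : ZMod n) (hk : k + 1 ≠ k) (M : Matrix (ZMod n) (ZMod n) R)
    (i j : ZMod n) :
    (Tmat n R s k * M) i j =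
      (if i = k then (s : R) else if i = k + 1 then ((s⁻¹ : Rˣ) : R) else 1) *
        M (Equiv.swap k (k+1) i) j := by
  rw [Matrix.mul_apply]
  rw [Finset.sum_eq_single (Equiv.swap k (k+1) i)]
  · rw [Tmat_apply_eq s k hk, if_pos rfl]
  · intro b _ hb
    rw [Tmat_apply_eq s k hk, if_neg hb, zero_mul]
  · simp

lemma mul_Tmat_apply (k : ZMod n) (hk : k + 1 ≠ k) (M : Matrix (ZMod n) (ZMod n) R)
    (i j : ZMod n) :
    (M * Tmat n R s k) i j =
      M i (Equiv.swap k (k+1) j) *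
        (if j = k then ((s⁻¹ : Rˣ) : R) else if j = k + 1 then (s : R) else 1) := by
  rw [Matrix.mul_apply]
  rw [Finset.sum_eq_single (Equiv.swap k (k+1) j)]
  · rw [Tmat_apply_eq s k hk]
    rw [if_pos (by rw [Equiv.swap_apply_self])]
    congr 1
    rcases eq_or_ne j k with rfl | h1
    · rw [Equiv.swap_apply_left, if_neg hk, if_pos rfl, if_pos rfl]
    · rcases eq_or_ne j (k+1) with rfl | h2
      · rw [Equiv.swap_apply_right, if_pos rfl, if_neg h1, if_pos rfl]
      · rw [Equiv.swap_apply_of_ne_of_ne h1 h2, if_neg h1, if_neg h2, if_neg h1, if_neg h2]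
  · intro b _ hb
    rw [Tmat_apply_eq s k hk]
    rw [if_neg, mul_zero]
    intro h; exact hb (by rw [h, Equiv.swap_apply_self])
  · simp

end

theorem stmt_4 (n : ℕ) [NeZero n] (hn : 3 ≤ n) (R : Type*) [CommRing R] (t s : Rˣ)
    (k : ZMod n) :
    Tmat n R s k * Tmat n R s (k + 1) * Bmat n R t k * Tmat n R s (k + 1) * Tmat n R s k =
      Bmat n R t (k + 1) := by
  have h1 : (1 : ZMod n) ≠ 0 := by
    have : ((1 : ℕ) : ZMod n) ≠ 0 := by
      rw [Ne, ZMod.natCast_eq_zero_iff]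
      intro h; have := Nat.le_of_dvd one_pos h; omega
    simpa using this
  have h2 : (2 : ZMod n) ≠ 0 := by
    have : ((2 : ℕ) : ZMod n) ≠ 0 := by
      rw [Ne, ZMod.natCast_eq_zero_iff]
      intro h; have := Nat.le_of_dvd two_pos h; omega
    simpa using this
  have e10 : k + 1 ≠ k := by
    intro h; apply h1; have := add_left_cancel (a := k) (b := 1) (c := 0) (by simpa using h); exact this
  have e21 : k + 1 + 1 ≠ k + 1 := by
    intro h; apply h1; have := add_left_cancel (a := k + 1) (b := 1) (c := 0) (by simpa using h); exact this
  have e20 : k + 2 ≠ k := by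
    intro h; apply h2; have := add_left_cancel (a := k) (b := 2) (c := 0) (by simpa using h); exact this
  have hadd : k + 1 + 1 = k + 2 := by ring
  have e21' : k + 2 ≠ k + 1 := by rw [← hadd]; exact e21
  ext i j
  simp only [mul_assoc]
  rw [Tmat_mul_apply s k e10, Tmat_mul_apply s (k+1) e21, ← mul_assoc (Bmat n R t k),
    mul_Tmat_apply s k e10, mul_Tmat_apply s (k+1) e21]
  rw [hadd]
  have s1k : Equiv.swap k (k+1) k = k + 1 := Equiv.swap_apply_left _ _
  have s1k1 : Equiv.swap k (k+1) (k+1) = k := Equiv.swap_apply_right _ _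
  have s1k2 : Equiv.swap k (k+1) (k+2) = k + 2 :=
    Equiv.swap_apply_of_ne_of_ne e20 e21'
  have s2k : Equiv.swap (k+1) (k+2) k = k :=
    Equiv.swap_apply_of_ne_of_ne (Ne.symm e10) (Ne.symm e20)
  have s2k1 : Equiv.swap (k+1) (k+2) (k+1) = k + 2 := Equiv.swap_apply_left _ _
  have s2k2 : Equiv.swap (k+1) (k+2) (k+2) = k + 1 := Equiv.swap_apply_right _ _
  rcases eq_or_ne i k with hi | hi1 <;>
    [skip; rcases eq_or_ne i (k+1) with hi | hi2 <;>
      [skip; rcases eq_or_ne i (k+2) with hi | hi3]] <;>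
  (rcases eq_or_ne j k with hj | hj1 <;>
    [skip; rcases eq_or_ne j (k+1) with hj | hj2 <;>
      [skip; rcases eq_or_ne j (k+2) with hj | hj3]]) <;>
  simp_all [Bmat, s1k, s1k1, s1k2, s2k, s2k1, s2k2, hadd, Equiv.swap_apply_of_ne_of_ne,
    Equiv.swap_apply_left, Equiv.swap_apply_right,
    e10, e20, e21, e21', Ne.symm e10, Ne.symm e20, Ne.symm e21', h1, h2,
    Units.mul_inv, Units.inv_mul, mul_comm, mul_assoc, mul_left_comm, mul_sub, sub_mul] <;>
  split_ifs <;> simp_all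
end

section
/- (Proposition 3.) There exists a group homomorphism ρ from the presented group VCB_n to the group of invertible n×n matrices over R sending, for each k ∈ ℤ/nℤ, the generator σ_k to B_k and the generator τ_k to T_k. -/
/-- The generators `σ_k`, `τ_k` (`k ∈ ZMod n`) of the virtual cylinder braid group. -/
inductive VCBGen (n : ℕ) : Type
  | sigma : ZMod n → VCBGen n
  | tau : ZMod n → VCBGen n

/-- The relations of the virtual cylinder braid group `VCB_n` (all indices modulo `n`):
braid relations for the `σ`'s and for the `τ`'s, `τ_k² = 1`, the detour relation
`τ_k τ_{k+1} σ_k τ_{k+1} τ_k = σ_{k+1}`, and far commutativity `x_i y_j = y_j x_i`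
for `x, y ∈ {σ, τ}` whenever `{i, i+1}` and `{j, j+1}` are disjoint in `ZMod n`. -/
def VCBRels (n : ℕ) : Set (FreeGroup (VCBGen n)) :=
  let σ : ZMod n → FreeGroup (VCBGen n) := fun k => FreeGroup.of (VCBGen.sigma k)
  let τ : ZMod n → FreeGroup (VCBGen n) := fun k => FreeGroup.of (VCBGen.tau k)
  { w | (∃ k, w = σ k * σ (k + 1) * σ k * (σ (k + 1) * σ k * σ (k + 1))⁻¹) ∨
        (∃ k, w = τ k * τ (k + 1) * τ k * (τ (k + 1) * τ k * τ (k + 1))⁻¹) ∨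
        (∃ k, w = τ k * τ k) ∨
        (∃ k, w = τ k * τ (k + 1) * σ k * τ (k + 1) * τ k * (σ (k + 1))⁻¹) ∨
        (∃ i j, Disjoint ({i, i + 1} : Set (ZMod n)) {j, j + 1} ∧
          ∃ x y : ZMod n → FreeGroup (VCBGen n),
            (x = σ ∨ x = τ) ∧ (y = σ ∨ y = τ) ∧
            w = x i * y j * (x i)⁻¹ * (y j)⁻¹) }

namespace VCBAux

variable {R : Type*} [CommRing R]

/-- Matrix that is the identity outside rows/columns `p, q`, with prescribed entries there. -/
def loc {ι : Type*} [DecidableEq ι] (a b c d : R) (p q : ι) : Matrix ι ι R := fun i j =>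
  if i = p ∧ j = p then a
  else if i = p ∧ j = q then b
  else if i = q ∧ j = p then c
  else if i = q ∧ j = q then d
  else if i = j then 1 else 0

/-- Extend a small matrix along an injection `e`, identity outside the range. -/
noncomputable def emb {ι κ : Type*} [Fintype ι] [DecidableEq ι] [DecidableEq κ]
    (e : ι → κ) (M : Matrix ι ι R) : Matrix κ κ R := fun i j =>
  if h : (∃ a, e a = i) ∧ (∃ b, e b = j) then M h.1.choose h.2.choose
  else if i = j then 1 else 0

section emb
variable {ι κ : Type*} [Fintype ι] [DecidableEq ι] [DecidableEq κ] {e : ι → κ}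

theorem emb_apply (he : Function.Injective e) (M : Matrix ι ι R) (a b : ι) :
    emb e M (e a) (e b) = M a b := by
  have h : (∃ x, e x = e a) ∧ (∃ y, e y = e b) := ⟨⟨a, rfl⟩, ⟨b, rfl⟩⟩
  rw [emb, dif_pos h, he h.1.choose_spec, he h.2.choose_spec]

theorem emb_left (M : Matrix ι ι R) (j : κ) {i : κ} (hi : i ∉ Set.range e) :
    emb e M i j = if i = j then 1 else 0 := by
  rw [emb, dif_neg]
  rintro ⟨⟨a, ha⟩, -⟩
  exact hi ⟨a, ha⟩

theorem emb_right (M : Matrix ι ι R) (i : κ) {j : κ} (hj : j ∉ Set.range e) :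
    emb e M i j = if i = j then 1 else 0 := by
  rw [emb, dif_neg]
  rintro ⟨-, ⟨b, hb⟩⟩
  exact hj ⟨b, hb⟩

theorem emb_one (he : Function.Injective e) :
    emb e (1 : Matrix ι ι R) = 1 := by
  ext i j
  by_cases hi : i ∈ Set.range e
  · obtain ⟨a, rfl⟩ := hi
    by_cases hj : j ∈ Set.range e
    · obtain ⟨b, rfl⟩ := hj
      rw [emb_apply he]
      simp [Matrix.one_apply, he.eq_iff]
    · rw [emb_right _ _ hj, Matrix.one_apply]
  · rw [emb_left _ _ hi, Matrix.one_apply]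

theorem emb_mul [Fintype κ] (he : Function.Injective e) (M N : Matrix ι ι R) :
    emb e (M * N) = emb e M * emb e N := by
  ext i j
  rw [Matrix.mul_apply]
  by_cases hi : i ∈ Set.range e
  · obtain ⟨a, rfl⟩ := hi
    by_cases hj : j ∈ Set.range e
    · obtain ⟨b, rfl⟩ := hj
      rw [emb_apply he, Matrix.mul_apply]
      have hz : ∀ l ∈ Finset.univ, l ∉ Finset.univ.image e →
          emb e M (e a) l * emb e N l (e b) = 0 := by
        intro l _ hl
        have hlr : l ∉ Set.range e := by
          intro ⟨c, hc⟩
          exact hl (Finset.mem_image.mpr ⟨c, Finset.mem_univ c, hc⟩)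
        rw [emb_right _ _ hlr, if_neg, zero_mul]
        rintro rfl
        exact hlr ⟨a, rfl⟩
      rw [← Finset.sum_subset (Finset.subset_univ _) hz,
        Finset.sum_image (fun x _ y _ h => he h)]
      simp_rw [emb_apply he]
    · have h1 : ∀ l, emb e N l j = if l = j then (1:R) else 0 := fun l => emb_right _ _ hj
      rw [emb_right _ _ hj]
      simp only [h1, mul_ite, mul_one, mul_zero]
      rw [Finset.sum_ite_eq' Finset.univ j (fun l => emb e M (e a) l), if_pos (Finset.mem_univ _),
        emb_right _ _ hj]
  · have h1 : ∀ (P : Matrix ι ι R) l, emb e P i l = if i = l then (1:R) else 0 :=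
      fun P l => emb_left _ _ hi
    rw [emb_left _ _ hi]
    simp only [h1, ite_mul, one_mul, zero_mul]
    rw [Finset.sum_ite_eq Finset.univ i (fun l => emb e N l j), if_pos (Finset.mem_univ _),
      emb_left _ _ hi]

theorem emb_loc (he : Function.Injective e) (a b c d : R) (p q : ι) :
    emb e (loc a b c d p q) = loc a b c d (e p) (e q) := by
  ext i j
  by_cases hi : i ∈ Set.range e
  · obtain ⟨a', rfl⟩ := hi
    by_cases hj : j ∈ Set.range e
    · obtain ⟨b', rfl⟩ := hj
      rw [emb_apply he]
      simp [loc, he.eq_iff]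
    · have h1 : j ≠ e p := fun h => hj ⟨p, h.symm⟩
      have h2 : j ≠ e q := fun h => hj ⟨q, h.symm⟩
      rw [emb_right _ _ hj]
      simp [loc, h1, h2]
  · have h1 : i ≠ e p := fun h => hi ⟨p, h.symm⟩
    have h2 : i ≠ e q := fun h => hi ⟨q, h.symm⟩
    rw [emb_left _ _ hi]
    simp [loc, h1, h2]

end emb

section fin
variable (t s : Rˣ)

/-- local `B` block -/
abbrev locB {ι : Type*} [DecidableEq ι] (p q : ι) : Matrix ι ι R :=
  loc (1 - (t : R)) (t : R) 1 0 p q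
/-- local `B⁻¹` block -/
abbrev locBi {ι : Type*} [DecidableEq ι] (p q : ι) : Matrix ι ι R :=
  loc 0 1 ((t⁻¹ : Rˣ) : R) (1 - ((t⁻¹ : Rˣ) : R)) p q
/-- local `T` block -/
abbrev locT {ι : Type*} [DecidableEq ι] (p q : ι) : Matrix ι ι R :=
  loc 0 (s : R) ((s⁻¹ : Rˣ) : R) 0 p q

theorem fin_Binv : locB t (0 : Fin 2) 1 * locBi t (0 : Fin 2) 1 = 1 := by
  ext i j
  fin_cases i <;> fin_cases j <;>
    simp [loc, Matrix.mul_apply, Fin.sum_univ_two, Matrix.one_apply, Units.mul_inv,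
      Units.inv_mul, sub_mul, mul_sub]

theorem fin_invB : locBi t (0 : Fin 2) 1 * locB t (0 : Fin 2) 1 = 1 := by
  ext i j
  fin_cases i <;> fin_cases j <;>
    simp [loc, Matrix.mul_apply, Fin.sum_univ_two, Matrix.one_apply, Units.mul_inv,
      Units.inv_mul, sub_mul, mul_sub]

theorem fin_Tsq : locT s (0 : Fin 2) 1 * locT s (0 : Fin 2) 1 = 1 := by
  ext i j
  fin_cases i <;> fin_cases j <;>
    simp [loc, Matrix.mul_apply, Fin.sum_univ_two, Matrix.one_apply, Units.mul_inv,
      Units.inv_mul]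

theorem fin_braidB :
    locB t (0 : Fin 3) 1 * locB t (1 : Fin 3) 2 * locB t (0 : Fin 3) 1 =
    locB t (1 : Fin 3) 2 * locB t (0 : Fin 3) 1 * locB t (1 : Fin 3) 2 := by
  ext i j
  fin_cases i <;> fin_cases j <;>
    simp [loc, Matrix.mul_apply, Fin.sum_univ_three] <;> ring

theorem fin_braidT :
    locT s (0 : Fin 3) 1 * locT s (1 : Fin 3) 2 * locT s (0 : Fin 3) 1 =
    locT s (1 : Fin 3) 2 * locT s (0 : Fin 3) 1 * locT s (1 : Fin 3) 2 := by
  ext i j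
  fin_cases i <;> fin_cases j <;>
    simp [loc, Matrix.mul_apply, Fin.sum_univ_three] <;> ring

theorem fin_detour :
    locT s (0 : Fin 3) 1 * locT s (1 : Fin 3) 2 * locB t (0 : Fin 3) 1 *
      locT s (1 : Fin 3) 2 * locT s (0 : Fin 3) 1 = locB t (1 : Fin 3) 2 := by
  ext i j
  fin_cases i <;> fin_cases j <;>
    simp [loc, Matrix.mul_apply, Fin.sum_univ_three, Units.mul_inv, Units.inv_mul,
      mul_sub, sub_mul] <;> rw [mul_right_comm, Units.inv_mul, one_mul] <;>
    simp [Units.mul_inv, Units.inv_mul, ← Units.val_mul, mul_sub, sub_mul, mul_assoc]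

theorem fin_comm (a b c d a' b' c' d' : R) :
    loc a b c d (0 : Fin 4) 1 * loc a' b' c' d' (2 : Fin 4) 3 =
    loc a' b' c' d' (2 : Fin 4) 3 * loc a b c d (0 : Fin 4) 1 := by
  ext i j
  fin_cases i <;> fin_cases j <;>
    simp [loc, Matrix.mul_apply, Fin.sum_univ_four] <;> ring

end fin

section zmod
variable (n : ℕ) [NeZero n]

/-- The embedding of `Fin m` into `ZMod n` starting at `k`. -/
def cemb (m : ℕ) (k : ZMod n) : Fin m → ZMod n := fun a => k + (a.val : ZMod n)

variable {n}

theorem cemb_inj {m : ℕ} (hm : m ≤ n) (k : ZMod n) : Function.Injective (cemb n m k) := by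
  intro x y h
  have h' : ((x.val : ZMod n)) = (y.val : ZMod n) := add_left_cancel h
  have h2 := congrArg ZMod.val h'
  rwa [ZMod.val_cast_of_lt (lt_of_lt_of_le x.isLt hm),
    ZMod.val_cast_of_lt (lt_of_lt_of_le y.isLt hm), ← Fin.ext_iff] at h2

theorem cemb2_0 (k : ZMod n) : cemb n 2 k 0 = k := by simp [cemb]
theorem cemb2_1 (k : ZMod n) : cemb n 2 k 1 = k + 1 := by simp [cemb]
theorem cemb3_0 (k : ZMod n) : cemb n 3 k 0 = k := by simp [cemb]
theorem cemb3_1 (k : ZMod n) : cemb n 3 k 1 = k + 1 := by simp [cemb]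
theorem cemb3_2 (k : ZMod n) : cemb n 3 k 2 = k + 1 + 1 := by
  show k + ((2 : ℕ) : ZMod n) = k + 1 + 1
  push_cast
  ring

variable (t s : Rˣ)

theorem Bmat_eq (k : ZMod n) : Bmat n R t k = locB t k (k + 1) := rfl
theorem Tmat_eq (k : ZMod n) : Tmat n R s k = locT s k (k + 1) := rfl

theorem relB_inv (h2 : 2 ≤ n) (k : ZMod n) :
    Bmat n R t k * locBi t k (k + 1) = 1 := by
  have he := cemb_inj h2 k
  have h := congrArg (emb (cemb n 2 k)) (fin_Binv t (R := R))
  simp only [emb_mul he, emb_loc he, emb_one he, cemb2_0, cemb2_1] at h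
  exact h

theorem relB_inv' (h2 : 2 ≤ n) (k : ZMod n) :
    locBi t k (k + 1) * Bmat n R t k = 1 := by
  have he := cemb_inj h2 k
  have h := congrArg (emb (cemb n 2 k)) (fin_invB t (R := R))
  simp only [emb_mul he, emb_loc he, emb_one he, cemb2_0, cemb2_1] at h
  exact h

theorem relT_sq (h2 : 2 ≤ n) (k : ZMod n) :
    Tmat n R s k * Tmat n R s k = 1 := by
  have he := cemb_inj h2 k
  have h := congrArg (emb (cemb n 2 k)) (fin_Tsq s (R := R))
  simp only [emb_mul he, emb_loc he, emb_one he, cemb2_0, cemb2_1] at h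
  exact h

theorem relB_braid (h3 : 3 ≤ n) (k : ZMod n) :
    Bmat n R t k * Bmat n R t (k + 1) * Bmat n R t k =
    Bmat n R t (k + 1) * Bmat n R t k * Bmat n R t (k + 1) := by
  have he := cemb_inj h3 k
  have h := congrArg (emb (cemb n 3 k)) (fin_braidB t (R := R))
  simp only [emb_mul he, emb_loc he, cemb3_0, cemb3_1, cemb3_2] at h
  exact h

theorem relT_braid (h3 : 3 ≤ n) (k : ZMod n) :
    Tmat n R s k * Tmat n R s (k + 1) * Tmat n R s k =
    Tmat n R s (k + 1) * Tmat n R s k * Tmat n R s (k + 1) := by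
  have he := cemb_inj h3 k
  have h := congrArg (emb (cemb n 3 k)) (fin_braidT s (R := R))
  simp only [emb_mul he, emb_loc he, cemb3_0, cemb3_1, cemb3_2] at h
  exact h

theorem rel_detour (h3 : 3 ≤ n) (k : ZMod n) :
    Tmat n R s k * Tmat n R s (k + 1) * Bmat n R t k * Tmat n R s (k + 1) * Tmat n R s k =
    Bmat n R t (k + 1) := by
  have he := cemb_inj h3 k
  have h := congrArg (emb (cemb n 3 k)) (fin_detour t s (R := R))
  simp only [emb_mul he, emb_loc he, cemb3_0, cemb3_1, cemb3_2] at h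
  exact h

/-- Embedding of `Fin 4` hitting `i, i+1, j, j+1`. -/
def qemb {n : ℕ} (i j : ZMod n) : Fin 4 → ZMod n := fun x =>
  if x.val = 0 then i else if x.val = 1 then i + 1 else if x.val = 2 then j else j + 1

theorem rel_comm (h3 : 3 ≤ n) {i j : ZMod n}
    (hd : Disjoint ({i, i + 1} : Set (ZMod n)) {j, j + 1}) (a b c d a' b' c' d' : R) :
    loc a b c d i (i + 1) * loc a' b' c' d' j (j + 1) =
    loc a' b' c' d' j (j + 1) * loc a b c d i (i + 1) := by
  haveI : Fact (1 < n) := ⟨by omega⟩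
  have h10 : (1 : ZMod n) ≠ 0 := one_ne_zero
  have hself : ∀ x : ZMod n, x ≠ x + 1 := fun x h => h10 (left_eq_add.mp h)
  rw [Set.disjoint_left] at hd
  have hij : i ≠ j := fun h => hd (a := i) (by simp) (by simp [h])
  have hij1 : i ≠ j + 1 := fun h => hd (a := i) (by simp) (by simp [h])
  have hi1j : i + 1 ≠ j := fun h => hd (a := i + 1) (by simp) (by simp [h])
  have hi1j1 : i + 1 ≠ j + 1 := fun h => hd (a := i + 1) (by simp) (by simp [h])
  have hsi := hself i
  have hsj := hself j
  have he : Function.Injective (qemb i j) := by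
    intro x y h
    fin_cases x <;> fin_cases y <;>
      simp_all [qemb, hij, hij1, hi1j, hi1j1, hij.symm, hij1.symm, hi1j.symm, hi1j1.symm,
        hsi, hsj]
  have h := congrArg (emb (qemb i j)) (fin_comm a b c d a' b' c' d' (R := R))
  simp only [emb_mul he, emb_loc he] at h
  rw [show qemb i j 0 = i from rfl, show qemb i j 1 = i + 1 from rfl,
    show qemb i j 2 = j from rfl, show qemb i j 3 = j + 1 from rfl] at h
  exact h

/-- `B_k` as a unit of the matrix ring. -/
def Bunit (h2 : 2 ≤ n) (k : ZMod n) : (Matrix (ZMod n) (ZMod n) R)ˣ :=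
  ⟨Bmat n R t k, locBi t k (k + 1), relB_inv t h2 k, relB_inv' t h2 k⟩

/-- `T_k` as a unit of the matrix ring. -/
def Tunit (h2 : 2 ≤ n) (k : ZMod n) : (Matrix (ZMod n) (ZMod n) R)ˣ :=
  ⟨Tmat n R s k, Tmat n R s k, relT_sq s h2 k, relT_sq s h2 k⟩

@[simp] theorem val_Bunit (h2 : 2 ≤ n) (k : ZMod n) :
    ((Bunit t h2 k : (Matrix (ZMod n) (ZMod n) R)ˣ) : Matrix (ZMod n) (ZMod n) R)
      = Bmat n R t k := rfl

@[simp] theorem val_Tunit (h2 : 2 ≤ n) (k : ZMod n) :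
    ((Tunit s h2 k : (Matrix (ZMod n) (ZMod n) R)ˣ) : Matrix (ZMod n) (ZMod n) R)
      = Tmat n R s k := rfl

end zmod


end VCBAux


theorem stmt_8 (n : ℕ) [NeZero n] (hn : 3 ≤ n) (R : Type*) [CommRing R] (t s : Rˣ) :
    ∃ ρ : PresentedGroup (VCBRels n) →* (Matrix (ZMod n) (ZMod n) R)ˣ,
      ∀ k : ZMod n,
        ((ρ (PresentedGroup.of (VCBGen.sigma k)) : Matrix (ZMod n) (ZMod n) R)
            = Bmat n R t k) ∧
        ((ρ (PresentedGroup.of (VCBGen.tau k)) : Matrix (ZMod n) (ZMod n) R)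
            = Tmat n R s k) := by
  have h2 : 2 ≤ n := by omega
  let f : VCBGen n → (Matrix (ZMod n) (ZMod n) R)ˣ := fun g =>
    match g with
    | .sigma k => VCBAux.Bunit t h2 k
    | .tau k => VCBAux.Tunit s h2 k
  have hfσ : ∀ k, f (VCBGen.sigma k) = VCBAux.Bunit t h2 k := fun _ => rfl
  have hfτ : ∀ k, f (VCBGen.tau k) = VCBAux.Tunit s h2 k := fun _ => rfl
  have hcomm : ∀ (i j : ZMod n), Disjoint ({i, i + 1} : Set (ZMod n)) {j, j + 1} →
      ∀ u v : (Matrix (ZMod n) (ZMod n) R)ˣ,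
      (∃ a b c d : R, (u : Matrix (ZMod n) (ZMod n) R) = VCBAux.loc a b c d i (i + 1)) →
      (∃ a b c d : R, (v : Matrix (ZMod n) (ZMod n) R) = VCBAux.loc a b c d j (j + 1)) →
      u * v = v * u := by
    rintro i j hd u v ⟨a, b, c, d, hu⟩ ⟨a', b', c', d', hv⟩
    refine Units.ext ?_
    rw [Units.val_mul, Units.val_mul, hu, hv]
    exact VCBAux.rel_comm hn hd a b c d a' b' c' d'
  have hrels : ∀ r ∈ VCBRels n, FreeGroup.lift f r = 1 := by
    intro r hr
    simp only [VCBRels, Set.mem_setOf_eq] at hr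
    rcases hr with ⟨k, rfl⟩ | ⟨k, rfl⟩ | ⟨k, rfl⟩ | ⟨k, rfl⟩ | ⟨i, j, hd, x, y, hx, hy, rfl⟩
    · simp only [map_mul, map_inv, FreeGroup.lift_apply_of, mul_inv_eq_one, hfσ]
      refine Units.ext ?_
      simp only [Units.val_mul, VCBAux.val_Bunit]
      exact VCBAux.relB_braid t hn k
    · simp only [map_mul, map_inv, FreeGroup.lift_apply_of, mul_inv_eq_one, hfτ]
      refine Units.ext ?_
      simp only [Units.val_mul, VCBAux.val_Tunit]
      exact VCBAux.relT_braid s hn k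
    · simp only [map_mul, FreeGroup.lift_apply_of, hfτ]
      refine Units.ext ?_
      simp only [Units.val_mul, VCBAux.val_Tunit, Units.val_one]
      exact VCBAux.relT_sq s h2 k
    · simp only [map_mul, map_inv, FreeGroup.lift_apply_of, mul_inv_eq_one, hfσ, hfτ]
      refine Units.ext ?_
      simp only [Units.val_mul, VCBAux.val_Bunit, VCBAux.val_Tunit]
      exact VCBAux.rel_detour t s hn k
    · have hB : ∀ k : ZMod n, ∃ a b c d : R,
          ((VCBAux.Bunit t h2 k : (Matrix (ZMod n) (ZMod n) R)ˣ) : Matrix (ZMod n) (ZMod n) R)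
            = VCBAux.loc a b c d k (k + 1) :=
        fun k => ⟨1 - (t : R), (t : R), 1, 0, rfl⟩
      have hT : ∀ k : ZMod n, ∃ a b c d : R,
          ((VCBAux.Tunit s h2 k : (Matrix (ZMod n) (ZMod n) R)ˣ) : Matrix (ZMod n) (ZMod n) R)
            = VCBAux.loc a b c d k (k + 1) :=
        fun k => ⟨0, (s : R), ((s⁻¹ : Rˣ) : R), 0, rfl⟩
      rcases hx with rfl | rfl <;> rcases hy with rfl | rfl <;>
      · simp only [map_mul, map_inv, FreeGroup.lift_apply_of, hfσ, hfτ, mul_inv_eq_one,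
          mul_inv_eq_iff_eq_mul, one_mul]
        first
          | exact hcomm i j hd _ _ (hB i) (hB j)
          | exact hcomm i j hd _ _ (hB i) (hT j)
          | exact hcomm i j hd _ _ (hT i) (hB j)
          | exact hcomm i j hd _ _ (hT i) (hT j)
  refine ⟨PresentedGroup.toGroup hrels, fun k => ⟨?_, ?_⟩⟩ <;>
    rw [PresentedGroup.toGroup.of] <;> rfl
end

section
/- Let C be the n×n permutation matrix over R, rows and columns indexed by ℤ/nℤ, with C(i,j) = 1 if j = i+1 and C(i,j) = 0 otherwise (the cyclic shift matrix, the image ρ(ζ) of the rotation braid ζ). Then for every k ∈ ℤ/nℤ, one has C · B_k = B_{k−1} · C and C · T_k = T_{k−1} · C; equivalently, conjugation by C shifts the index of the generator matrices. -/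
/-- The cyclic shift permutation matrix `ρ(ζ)`: `C i j = 1` iff `j = i + 1`. -/
def Cmat (n : ℕ) (R : Type*) [CommRing R] : Matrix (ZMod n) (ZMod n) R :=
  fun i j => if j = i + 1 then 1 else 0

lemma Cmat_mul {n : ℕ} [NeZero n] {R : Type*} [CommRing R]
    (M : Matrix (ZMod n) (ZMod n) R) (i j : ZMod n) :
    (Cmat n R * M) i j = M (i + 1) j := by
  simp [Matrix.mul_apply, Cmat, ite_mul, Finset.sum_ite_eq, Finset.sum_ite_eq']

lemma mul_Cmat {n : ℕ} [NeZero n] {R : Type*} [CommRing R]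
    (M : Matrix (ZMod n) (ZMod n) R) (i j : ZMod n) :
    (M * Cmat n R) i j = M i (j - 1) := by
  have h : ∀ j' : ZMod n, (j = j' + 1) = (j' = j - 1) := by
    intro j'
    rw [eq_iff_iff, eq_comm, eq_sub_iff_add_eq, eq_comm]
  simp [Matrix.mul_apply, Cmat, mul_ite, h, Finset.sum_ite_eq, Finset.sum_ite_eq']

theorem stmt_9 (n : ℕ) [NeZero n] (hn : 2 ≤ n) (R : Type*) [CommRing R] (t s : Rˣ)
    (k : ZMod n) :
    Cmat n R * Bmat n R t k = Bmat n R t (k - 1) * Cmat n R ∧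
    Cmat n R * Tmat n R s k = Tmat n R s (k - 1) * Cmat n R := by
  have e1 : ∀ a b : ZMod n, (a = b - 1) = (a + 1 = b) := by
    intro a b; rw [eq_iff_iff, eq_sub_iff_add_eq]
  have e2 : ∀ a b : ZMod n, (a - 1 = b) = (a = b + 1) := by
    intro a b; rw [eq_iff_iff, sub_eq_iff_eq_add]
  constructor <;> ext i j <;>
    simp only [Cmat_mul, mul_Cmat, Bmat, Tmat, e1, e2, sub_add_cancel, add_left_inj]
end

section
/- For every i with 0 ≤ i ≤ n−3, the matrices S_i satisfy the braid relation S_i · S_{i+1} · S_i = S_{i+1} · S_i · S_{i+1}. -/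
/-- The matrix `ρ̃(σ_i)`: agrees with the identity outside rows/columns `i, i+1`,
with block `[[1-t, t],[1, 0]]` in rows/columns `i, i+1` (indices in `Fin n`). -/
def Smat (n : ℕ) (R : Type*) [CommRing R] (t : Rˣ) (i : ℕ) :
    Matrix (Fin n) (Fin n) R := fun a b =>
  if a.val = i ∧ b.val = i then 1 - (t : R)
  else if a.val = i ∧ b.val = i + 1 then (t : R)
  else if a.val = i + 1 ∧ b.val = i then 1
  else if a.val = i + 1 ∧ b.val = i + 1 then 0
  else if a = b then 1 else 0

/-- The matrix `ρ̃(π_i)`: agrees with the identity outside rows/columns `i, i+1`,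
with block `[[0, s],[s⁻¹, 0]]` in rows/columns `i, i+1` (indices in `Fin n`). -/
def Pmat (n : ℕ) (R : Type*) [CommRing R] (s : Rˣ) (i : ℕ) :
    Matrix (Fin n) (Fin n) R := fun a b =>
  if a.val = i ∧ b.val = i then 0
  else if a.val = i ∧ b.val = i + 1 then (s : R)
  else if a.val = i + 1 ∧ b.val = i then ((s⁻¹ : Rˣ) : R)
  else if a.val = i + 1 ∧ b.val = i + 1 then 0
  else if a = b then 1 else 0

/-- The matrix `ρ̃(τ_i)`: agrees with the identity outside rows/columns `i, i+1`,
with block `[[0, r],[r⁻¹, 0]]` in rows/columns `i, i+1` (indices in `Fin n`). -/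
def Vmat (n : ℕ) (R : Type*) [CommRing R] (r : Rˣ) (i : ℕ) :
    Matrix (Fin n) (Fin n) R := fun a b =>
  if a.val = i ∧ b.val = i then 0
  else if a.val = i ∧ b.val = i + 1 then (r : R)
  else if a.val = i + 1 ∧ b.val = i then ((r⁻¹ : Rˣ) : R)
  else if a.val = i + 1 ∧ b.val = i + 1 then 0
  else if a = b then 1 else 0

lemma Smat_mul {n : ℕ} {R : Type*} [CommRing R] (t : Rˣ) (i : ℕ) (hi : i + 1 < n)
    (M : Matrix (Fin n) (Fin n) R) (a b : Fin n) :
    (Smat n R t i * M) a b =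
      if a.val = i then (1 - (t : R)) * M ⟨i, Nat.lt_of_succ_lt hi⟩ b + (t : R) * M ⟨i+1, hi⟩ b
      else if a.val = i + 1 then M ⟨i, Nat.lt_of_succ_lt hi⟩ b
      else M a b := by
  rw [Matrix.mul_apply]
  split_ifs with h1 h2
  · rw [Finset.sum_eq_add_of_mem ⟨i, Nat.lt_of_succ_lt hi⟩ ⟨i+1, hi⟩ (Finset.mem_univ _)
      (Finset.mem_univ _) (by simp [Fin.ext_iff]) ?_]
    · simp [Smat, h1]
    · intro c _ hc
      simp [Fin.ext_iff] at hc
      have hac : a ≠ c := by rw [Fin.ne_iff_vne]; omega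
      simp [Smat, h1, hc.1, hc.2, hac, (by omega : ¬ i = i + 1)]
  · rw [Finset.sum_eq_single_of_mem ⟨i, Nat.lt_of_succ_lt hi⟩ (Finset.mem_univ _) ?_]
    · simp [Smat, h2, h1]
    · intro c _ hc
      simp [Fin.ext_iff] at hc
      by_cases h : c.val = i + 1
      · simp [Smat, h2, hc, h]
      · have hac : a ≠ c := by rw [Fin.ne_iff_vne]; omega
        simp [Smat, h2, hc, h, hac, (by omega : ¬ i + 1 = i)]
  · rw [Finset.sum_eq_single_of_mem a (Finset.mem_univ _) ?_]
    · simp [Smat, h1, h2]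
    · intro c _ hc
      simp [Smat, h1, h2, hc, Ne.symm hc]


set_option maxHeartbeats 2000000 in
theorem stmt_10 (n : ℕ) (hn : 3 ≤ n) (R : Type*) [CommRing R] (t s r : Rˣ)
    (i : ℕ) (hi : i ≤ n - 3) :
    Smat n R t i * Smat n R t (i + 1) * Smat n R t i =
      Smat n R t (i + 1) * Smat n R t i * Smat n R t (i + 1) := by
  have h1 : i + 1 < n := by omega
  have h2 : i + 1 + 1 < n := by omega
  ext a b
  rw [mul_assoc, mul_assoc]
  simp only [Smat_mul t i h1, Smat_mul t (i+1) h2]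
  have e1 : ¬ i = i + 1 := by omega
  have e2 : ¬ i = i + 1 + 1 := by omega
  have e3 : ¬ i + 1 = i := by omega
  have e4 : ¬ i + 1 = i + 1 + 1 := by omega
  have e5 : ¬ i + 1 + 1 = i := by omega
  have e6 : ¬ i + 1 + 1 = i + 1 := by omega
  by_cases ha0 : (a : ℕ) = i <;> by_cases ha1 : (a : ℕ) = i + 1 <;>
    by_cases ha2 : (a : ℕ) = i + 1 + 1
  all_goals try omega
  all_goals simp only [Smat, ha0, ha1, ha2, e1, e2, e3, e4, e5, e6, Fin.val_mk, Fin.ext_iff,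
      if_true, if_false, eq_self_iff_true, true_and, false_and, and_true, and_false,
      not_false_eq_true, not_true_eq_false, ite_true, ite_false]
  all_goals try split_ifs
  all_goals try rfl
  all_goals try (exfalso; omega)
  all_goals try ring
end

section
/- For all i, j with 0 ≤ i, j ≤ n−2 and |i − j| = 1, the mixed relation P_i · P_j · S_i = S_j · P_i · P_j holds. -/
/-- The transposition of `i` and `i+1` as a function on `ℕ`. -/
def tauf (i x : ℕ) : ℕ := if x = i then i + 1 else if x = i + 1 then i else x

lemma tauf_lt {n i x : ℕ} (h : i + 1 < n) (hx : x < n) : tauf i x < n := by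
  unfold tauf; split_ifs <;> omega

lemma tauf_tauf (i x : ℕ) : tauf i (tauf i x) = x := by
  unfold tauf; split_ifs <;> omega

/-- The weight of the unique nonzero entry in row `x` of `Pmat n R s i`. -/
def wgt (R : Type*) [CommRing R] (s : Rˣ) (i x : ℕ) : R :=
  if x = i then (s : R) else if x = i + 1 then ((s⁻¹ : Rˣ) : R) else 1

/-- The entries of `Smat` as a function of the (ℕ-valued) indices. -/
def sent (R : Type*) [CommRing R] (t : Rˣ) (i k l : ℕ) : R :=
  if k = i ∧ l = i then 1 - (t : R)
  else if k = i ∧ l = i + 1 then (t : R)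
  else if k = i + 1 ∧ l = i then 1
  else if k = i + 1 ∧ l = i + 1 then 0
  else if k = l then 1 else 0

lemma Smat_apply {n : ℕ} (R : Type*) [CommRing R] (t : Rˣ) (i : ℕ) (a b : Fin n) :
    Smat n R t i a b = sent R t i a.val b.val := by
  simp only [Smat, sent, Fin.ext_iff]

lemma Pmat_apply_eq {n : ℕ} (R : Type*) [CommRing R] (s : Rˣ) (i : ℕ) (a b : Fin n) :
    Pmat n R s i a b = if b.val = tauf i a.val then wgt R s i a.val else 0 := by
  simp only [Pmat, tauf, wgt, Fin.ext_iff]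
  split_ifs <;> first | rfl | omega

lemma Pmat_mul {n : ℕ} (R : Type*) [CommRing R] (s : Rˣ) {i : ℕ} (h : i + 1 < n)
    (M : Matrix (Fin n) (Fin n) R) (a b : Fin n) :
    (Pmat n R s i * M) a b = wgt R s i a.val * M ⟨tauf i a.val, tauf_lt h a.isLt⟩ b := by
  rw [Matrix.mul_apply]
  rw [Fintype.sum_eq_single (⟨tauf i a.val, tauf_lt h a.isLt⟩ : Fin n)]
  · rw [Pmat_apply_eq]; simp
  · intro x hx
    rw [Pmat_apply_eq, if_neg, zero_mul]
    exact fun hc => hx (Fin.ext hc)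

lemma mul_Pmat {n : ℕ} (R : Type*) [CommRing R] (s : Rˣ) {i : ℕ} (h : i + 1 < n)
    (M : Matrix (Fin n) (Fin n) R) (a b : Fin n) :
    (M * Pmat n R s i) a b = M a ⟨tauf i b.val, tauf_lt h b.isLt⟩ * wgt R s i (tauf i b.val) := by
  rw [Matrix.mul_apply]
  rw [Fintype.sum_eq_single (⟨tauf i b.val, tauf_lt h b.isLt⟩ : Fin n)]
  · rw [Pmat_apply_eq, if_pos]
    simp [tauf_tauf]
  · intro x hx
    rw [Pmat_apply_eq, if_neg, mul_zero]
    intro hc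
    apply hx
    apply Fin.ext
    have := congrArg (tauf i) hc
    simpa [tauf_tauf] using this.symm

lemma na11 (m : ℕ) : m + 1 + 1 = m + 2 := rfl
lemma nq1 : ∀ m : ℕ, ¬(m + 1 = m) := fun m => by omega
lemma nq2 : ∀ m : ℕ, ¬(m = m + 1) := fun m => by omega
lemma nq3 : ∀ m : ℕ, ¬(m + 2 = m) := fun m => by omega
lemma nq4 : ∀ m : ℕ, ¬(m = m + 2) := fun m => by omega
lemma nq5 : ∀ m : ℕ, ¬(m + 2 = m + 1) := fun m => by omega
lemma nq6 : ∀ m : ℕ, ¬(m + 1 = m + 2) := fun m => by omega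

set_option maxHeartbeats 1600000 in
lemma key1 (R : Type*) [CommRing R] (t s : Rˣ) (i a b : ℕ) :
    wgt R s i a * (wgt R s (i+1) (tauf i a) * sent R t i (tauf (i+1) (tauf i a)) b) =
      sent R t (i+1) a (tauf i (tauf (i+1) b)) * wgt R s i (tauf i (tauf (i+1) b)) *
        wgt R s (i+1) (tauf (i+1) b) := by
  have hs1 : (s : R) * ((s⁻¹ : Rˣ) : R) = 1 := by exact_mod_cast s.mul_inv
  have hs2 : ((s⁻¹ : Rˣ) : R) * (s : R) = 1 := by exact_mod_cast s.inv_mul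
  rcases show a = i ∨ a = i+1 ∨ a = i+2 ∨ (a ≠ i ∧ a ≠ i+1 ∧ a ≠ i+2) from by omega
    with ha | ha | ha | ⟨h1, h2, h3⟩ <;>
  rcases show b = i ∨ b = i+1 ∨ b = i+2 ∨ (b ≠ i ∧ b ≠ i+1 ∧ b ≠ i+2) from by omega
    with hb | hb | hb | ⟨h4, h5, h6⟩ <;>
  (try subst ha) <;> (try subst hb) <;>
  simp only [tauf, wgt, sent, na11, nq1, nq2, nq3, nq4, nq5, nq6, if_true, if_false,
    eq_self_iff_true, ite_true, ite_false, true_and, and_true, false_and, and_false,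
    if_neg, not_false_iff] <;>
  (try split_ifs) <;>
  first
    | rfl
    | (exfalso; omega)
    | omega
    | ring1
    | linear_combination (1 - (t : R)) * hs1
    | linear_combination (t : R) * hs1
    | linear_combination hs1
    | linear_combination (1 - (t : R)) * hs2
    | linear_combination (t : R) * hs2
    | linear_combination hs2

set_option maxHeartbeats 1600000 in
lemma key2 (R : Type*) [CommRing R] (t s : Rˣ) (j a b : ℕ) :
    wgt R s (j+1) a * (wgt R s j (tauf (j+1) a) * sent R t (j+1) (tauf j (tauf (j+1) a)) b) =
      sent R t j a (tauf (j+1) (tauf j b)) * wgt R s (j+1) (tauf (j+1) (tauf j b)) *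
        wgt R s j (tauf j b) := by
  have hs1 : (s : R) * ((s⁻¹ : Rˣ) : R) = 1 := by exact_mod_cast s.mul_inv
  have hs2 : ((s⁻¹ : Rˣ) : R) * (s : R) = 1 := by exact_mod_cast s.inv_mul
  rcases show a = j ∨ a = j+1 ∨ a = j+2 ∨ (a ≠ j ∧ a ≠ j+1 ∧ a ≠ j+2) from by omega
    with ha | ha | ha | ⟨h1, h2, h3⟩ <;>
  rcases show b = j ∨ b = j+1 ∨ b = j+2 ∨ (b ≠ j ∧ b ≠ j+1 ∧ b ≠ j+2) from by omega
    with hb | hb | hb | ⟨h4, h5, h6⟩ <;>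
  (try subst ha) <;> (try subst hb) <;>
  simp only [tauf, wgt, sent, na11, nq1, nq2, nq3, nq4, nq5, nq6, if_true, if_false,
    eq_self_iff_true, ite_true, ite_false, true_and, and_true, false_and, and_false,
    if_neg, not_false_iff] <;>
  (try split_ifs) <;>
  first
    | rfl
    | (exfalso; omega)
    | omega
    | ring1
    | linear_combination (1 - (t : R)) * hs1
    | linear_combination (t : R) * hs1
    | linear_combination hs1
    | linear_combination (1 - (t : R)) * hs2
    | linear_combination (t : R) * hs2
    | linear_combination hs2

theorem stmt_13 (n : ℕ) (hn : 3 ≤ n) (R : Type*) [CommRing R] (t s r : Rˣ)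
    (i j : ℕ) (hi : i ≤ n - 2) (hj : j ≤ n - 2) (hij : |(i : ℤ) - (j : ℤ)| = 1) :
    Pmat n R s i * Pmat n R s j * Smat n R t i =
      Smat n R t j * Pmat n R s i * Pmat n R s j := by
  have hi' : i + 1 < n := by omega
  have hj' : j + 1 < n := by omega
  have hcase : j = i + 1 ∨ i = j + 1 := by
    rcases (abs_eq (by norm_num : (0:ℤ) ≤ 1)).mp hij with h | h
    · right; omega
    · left; omega
  rcases hcase with hc | hc <;> subst hc <;> ext a b <;>
    rw [Matrix.mul_assoc, Pmat_mul R s hi', Pmat_mul R s hj', mul_Pmat R s hj',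
      mul_Pmat R s hi', Smat_apply, Smat_apply]
  · exact key1 R t s i a.val b.val
  · exact key2 R t s j a.val b.val
end

section
/- For all i, j with 0 ≤ i, j ≤ n−2 and |i − j| = 1, the mixed relations V_i · V_j · S_i = S_j · V_i · V_j and V_i · V_j · P_i = P_j · V_i · V_j hold. -/
/-- Generic matrix with 2×2 block `[[x11,x12],[x21,x22]]` at rows/columns `i, i+1`. -/
def Gmat (n : ℕ) (R : Type*) [CommRing R] (x11 x12 x21 x22 : R) (i : ℕ) :
    Matrix (Fin n) (Fin n) R := fun a b =>
  if a.val = i ∧ b.val = i then x11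
  else if a.val = i ∧ b.val = i + 1 then x12
  else if a.val = i + 1 ∧ b.val = i then x21
  else if a.val = i + 1 ∧ b.val = i + 1 then x22
  else if a = b then 1 else 0

lemma Vmat_mul_apply {n : ℕ} {R : Type*} [CommRing R] (r : Rˣ) (k : ℕ)
    (hk : k + 1 < n) (M : Matrix (Fin n) (Fin n) R) (a b : Fin n) :
    (Vmat n R r k * M) a b =
      if a.val = k then (r : R) * M ⟨k + 1, hk⟩ b
      else if a.val = k + 1 then ((r⁻¹ : Rˣ) : R) * M ⟨k, by omega⟩ b
      else M a b := by
  rw [Matrix.mul_apply]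
  have key : ∀ (x : Fin n) (w : R),
      (∀ c, Vmat n R r k a c = if c = x then w else 0) →
      ∑ c, Vmat n R r k a c * M c b = w * M x b := by
    intro x w h
    simp only [h, ite_mul, zero_mul, Finset.sum_ite_eq', Finset.mem_univ, if_true]
  split_ifs with h1 h2
  · exact key _ _ (fun c => by
      simp only [Vmat, Fin.ext_iff]
      split_ifs <;> first | rfl | (exfalso; omega))
  · exact key _ _ (fun c => by
      simp only [Vmat, Fin.ext_iff]
      split_ifs <;> first | rfl | (exfalso; omega))
  · exact key a 1 (fun c => by
      simp only [Vmat, Fin.ext_iff]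
      split_ifs <;> first | rfl | (exfalso; omega)) |>.trans (one_mul _)

lemma mul_Vmat_apply {n : ℕ} {R : Type*} [CommRing R] (r : Rˣ) (k : ℕ)
    (hk : k + 1 < n) (M : Matrix (Fin n) (Fin n) R) (a b : Fin n) :
    (M * Vmat n R r k) a b =
      if b.val = k then ((r⁻¹ : Rˣ) : R) * M a ⟨k + 1, hk⟩
      else if b.val = k + 1 then (r : R) * M a ⟨k, by omega⟩
      else M a b := by
  rw [Matrix.mul_apply]
  have key : ∀ (x : Fin n) (w : R),
      (∀ c, Vmat n R r k c b = if c = x then w else 0) →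
      ∑ c, M a c * Vmat n R r k c b = w * M a x := by
    intro x w h
    simp only [h, mul_ite, mul_zero, Finset.sum_ite_eq', Finset.mem_univ, if_true, mul_comm]
  split_ifs with h1 h2
  · exact key _ _ (fun c => by
      simp only [Vmat, Fin.ext_iff]
      split_ifs <;> first | rfl | (exfalso; omega))
  · exact key _ _ (fun c => by
      simp only [Vmat, Fin.ext_iff]
      split_ifs <;> first | rfl | (exfalso; omega))
  · exact key b 1 (fun c => by
      simp only [Vmat, Fin.ext_iff]
      split_ifs <;> first | rfl | (exfalso; omega)) |>.trans (one_mul _)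

set_option maxHeartbeats 1600000 in
lemma conj1 {n : ℕ} {R : Type*} [CommRing R] (r : Rˣ) (x11 x12 x21 x22 : R)
    (k : ℕ) (hk : k + 2 < n) :
    Vmat n R r k * Vmat n R r (k+1) * Gmat n R x11 x12 x21 x22 k
      = Gmat n R x11 x12 x21 x22 (k+1) * Vmat n R r k * Vmat n R r (k+1) := by
  have h1 : k + 1 < n := by omega
  ext a b
  conv_lhs => rw [Matrix.mul_assoc]
  have ha : a.val = k ∨ a.val = k+1 ∨ a.val = k+2 ∨ (a.val ≠ k ∧ a.val ≠ k+1 ∧ a.val ≠ k+2) := by omega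
  have hb : b.val = k ∨ b.val = k+1 ∨ b.val = k+2 ∨ (b.val ≠ k ∧ b.val ≠ k+1 ∧ b.val ≠ k+2) := by omega
  rcases ha with ha|ha|ha|⟨ha1,ha2,ha3⟩ <;> rcases hb with hb|hb|hb|⟨hb1,hb2,hb3⟩ <;>
    simp [Vmat_mul_apply r k h1, Vmat_mul_apply r (k+1) hk, mul_Vmat_apply r k h1,
      mul_Vmat_apply r (k+1) hk, Gmat, Fin.ext_iff, *] <;>
    first | ring1 | omega | (intro h; exfalso; omega) | (split_ifs <;> first | ring1 | (exfalso; omega))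

set_option maxHeartbeats 1600000 in
lemma conj2 {n : ℕ} {R : Type*} [CommRing R] (r : Rˣ) (x11 x12 x21 x22 : R)
    (k : ℕ) (hk : k + 2 < n) :
    Vmat n R r (k+1) * Vmat n R r k * Gmat n R x11 x12 x21 x22 (k+1)
      = Gmat n R x11 x12 x21 x22 k * Vmat n R r (k+1) * Vmat n R r k := by
  have h1 : k + 1 < n := by omega
  ext a b
  conv_lhs => rw [Matrix.mul_assoc]
  have ha : a.val = k ∨ a.val = k+1 ∨ a.val = k+2 ∨ (a.val ≠ k ∧ a.val ≠ k+1 ∧ a.val ≠ k+2) := by omega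
  have hb : b.val = k ∨ b.val = k+1 ∨ b.val = k+2 ∨ (b.val ≠ k ∧ b.val ≠ k+1 ∧ b.val ≠ k+2) := by omega
  rcases ha with ha|ha|ha|⟨ha1,ha2,ha3⟩ <;> rcases hb with hb|hb|hb|⟨hb1,hb2,hb3⟩ <;>
    simp [Vmat_mul_apply r k h1, Vmat_mul_apply r (k+1) hk, mul_Vmat_apply r k h1,
      mul_Vmat_apply r (k+1) hk, Gmat, Fin.ext_iff, *] <;>
    first | ring1 | omega | (intro h; exfalso; omega) | (split_ifs <;> first | ring1 | (exfalso; omega))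

lemma Smat_eq_Gmat (n : ℕ) (R : Type*) [CommRing R] (t : Rˣ) (i : ℕ) :
    Smat n R t i = Gmat n R (1 - (t : R)) (t : R) 1 0 i := rfl

lemma Pmat_eq_Gmat (n : ℕ) (R : Type*) [CommRing R] (s : Rˣ) (i : ℕ) :
    Pmat n R s i = Gmat n R 0 (s : R) ((s⁻¹ : Rˣ) : R) 0 i := rfl

theorem stmt_15 (n : ℕ) (hn : 3 ≤ n) (R : Type*) [CommRing R] (t s r : Rˣ)
    (i j : ℕ) (hi : i ≤ n - 2) (hj : j ≤ n - 2) (hij : |(i : ℤ) - (j : ℤ)| = 1) :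
    Vmat n R r i * Vmat n R r j * Smat n R t i =
      Smat n R t j * Vmat n R r i * Vmat n R r j ∧
    Vmat n R r i * Vmat n R r j * Pmat n R s i =
      Pmat n R s j * Vmat n R r i * Vmat n R r j := by
  have hcase : j = i + 1 ∨ i = j + 1 := by
    rcases (abs_eq (by norm_num : (0:ℤ) ≤ 1)).mp hij with h | h <;> omega
  rcases hcase with h | h
  · subst h
    have hk : i + 2 < n := by omega
    rw [Smat_eq_Gmat, Smat_eq_Gmat, Pmat_eq_Gmat, Pmat_eq_Gmat]
    exact ⟨conj1 r _ _ _ _ i hk, conj1 r _ _ _ _ i hk⟩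
  · subst h
    have hk : j + 2 < n := by omega
    rw [Smat_eq_Gmat, Smat_eq_Gmat, Pmat_eq_Gmat, Pmat_eq_Gmat]
    exact ⟨conj2 r _ _ _ _ j hk, conj2 r _ _ _ _ j hk⟩
end

section
/- (Proposition 5.) There exists a group homomorphism ρ̃ from the presented group FVB_n to the group of invertible n×n matrices over R sending, for each i with 0 ≤ i ≤ n−2, the generator σ_i to S_i, the generator π_i to P_i, and the generator τ_i to V_i. -/
/-- The generators `σ_i, π_i, τ_i` (`0 ≤ i ≤ n - 2`) of the flat-virtual braid group. -/
inductive FVBGen (n : ℕ) : Type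
  | sigma : Fin (n - 1) → FVBGen n
  | pi : Fin (n - 1) → FVBGen n
  | tau : Fin (n - 1) → FVBGen n

/-- The relations of the flat-virtual braid group `FVB_n`:
`x_i y_j = y_j x_i` for `|i - j| > 1` and `x, y ∈ {σ, π, τ}`;
`x_i x_{i+1} x_i = x_{i+1} x_i x_{i+1}` for `x ∈ {σ, τ}`;
`π_i² = τ_i² = 1`;
`x_i x_j y_i = y_j x_i x_j` for `|i - j| = 1`, `x ∈ {π, τ}`, `y ∈ {σ, π}`. -/
def FVBRels (n : ℕ) : Set (FreeGroup (FVBGen n)) :=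
  let σ : Fin (n - 1) → FreeGroup (FVBGen n) := fun i => FreeGroup.of (FVBGen.sigma i)
  let π : Fin (n - 1) → FreeGroup (FVBGen n) := fun i => FreeGroup.of (FVBGen.pi i)
  let τ : Fin (n - 1) → FreeGroup (FVBGen n) := fun i => FreeGroup.of (FVBGen.tau i)
  { w | (∃ i j : Fin (n - 1), |((i : ℕ) : ℤ) - ((j : ℕ) : ℤ)| > 1 ∧
          ∃ x y : Fin (n - 1) → FreeGroup (FVBGen n),
            (x = σ ∨ x = π ∨ x = τ) ∧ (y = σ ∨ y = π ∨ y = τ) ∧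
            w = x i * y j * (x i)⁻¹ * (y j)⁻¹) ∨
        (∃ i j : Fin (n - 1), (j : ℕ) = (i : ℕ) + 1 ∧
          ∃ x : Fin (n - 1) → FreeGroup (FVBGen n), (x = σ ∨ x = τ) ∧
            w = x i * x j * x i * (x j * x i * x j)⁻¹) ∨
        (∃ i : Fin (n - 1), w = π i * π i ∨ w = τ i * τ i) ∨
        (∃ i j : Fin (n - 1), |((i : ℕ) : ℤ) - ((j : ℕ) : ℤ)| = 1 ∧
          ∃ x y : Fin (n - 1) → FreeGroup (FVBGen n),
            (x = π ∨ x = τ) ∧ (y = σ ∨ y = π) ∧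
            w = x i * x j * y i * (y j * x i * x j)⁻¹) }


namespace Stmt18Aux
variable {R : Type*} [CommRing R]

/-- Embed a `k × k` matrix at position `i` along the diagonal of an `n × n` matrix. -/
def emb (n i k : ℕ) (M : Matrix (Fin k) (Fin k) R) : Matrix (Fin n) (Fin n) R :=
  fun a b =>
    if ha : i ≤ a.val ∧ a.val < i + k then
      if hb : i ≤ b.val ∧ b.val < i + k then
        M ⟨a.val - i, by omega⟩ ⟨b.val - i, by omega⟩
      else 0
    else if a = b then 1 else 0

theorem emb_apply_in {n i k : ℕ} (M : Matrix (Fin k) (Fin k) R) {a b : Fin n}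
    (ha : i ≤ a.val ∧ a.val < i + k) (hb : i ≤ b.val ∧ b.val < i + k) :
    emb n i k M a b = M ⟨a.val - i, by omega⟩ ⟨b.val - i, by omega⟩ := by
  simp [emb, ha, hb]

theorem emb_apply_mixed {n i k : ℕ} (M : Matrix (Fin k) (Fin k) R) {a b : Fin n}
    (ha : i ≤ a.val ∧ a.val < i + k) (hb : ¬ (i ≤ b.val ∧ b.val < i + k)) :
    emb n i k M a b = 0 := by
  simp [emb, ha, hb]

theorem emb_apply_out {n i k : ℕ} (M : Matrix (Fin k) (Fin k) R) {a : Fin n}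
    (ha : ¬ (i ≤ a.val ∧ a.val < i + k)) (b : Fin n) :
    emb n i k M a b = if a = b then 1 else 0 := by
  simp [emb, ha]

theorem emb_one (n i k : ℕ) : emb n i k (1 : Matrix (Fin k) (Fin k) R) = 1 := by
  ext a b
  simp only [emb, Matrix.one_apply]
  split_ifs with ha hb h1 h2 h3 <;> simp_all [Fin.ext_iff] <;> omega

theorem emb_mul (n i k : ℕ) (hk : i + k ≤ n) (M N : Matrix (Fin k) (Fin k) R) :
    emb n i k M * emb n i k N = emb n i k (M * N) := by
  ext a b
  rw [Matrix.mul_apply]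
  by_cases ha : i ≤ a.val ∧ a.val < i + k
  · by_cases hb : i ≤ b.val ∧ b.val < i + k
    · have key : (∑ c : Fin n, emb n i k M a c * emb n i k N c b)
          = ∑ c : Fin k, emb n i k M a ⟨i + c.val, by omega⟩ * emb n i k N ⟨i + c.val, by omega⟩ b := by
        have hmap := Finset.sum_map (κ := Fin n) Finset.univ
          ⟨fun (c : Fin k) => (⟨i + c.val, by omega⟩ : Fin n),
            fun c d h => by simpa [Fin.ext_iff] using h⟩
          (fun c => emb n i k M a c * emb n i k N c b)
        rw [show (∑ c : Fin k, emb n i k M a ⟨i + c.val, by omega⟩ * emb n i k N ⟨i + c.val, by omega⟩ b)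
            = ∑ c ∈ Finset.univ.map ⟨fun (c : Fin k) => (⟨i + c.val, by omega⟩ : Fin n),
              fun c d h => by simpa [Fin.ext_iff] using h⟩,
                emb n i k M a c * emb n i k N c b from hmap.symm]
        apply (Finset.sum_subset (Finset.subset_univ _) ?_).symm
        intro x _ hx
        have hxw : ¬ (i ≤ x.val ∧ x.val < i + k) := by
          intro hw
          exact hx (Finset.mem_map.mpr ⟨⟨x.val - i, by omega⟩, Finset.mem_univ _, by
            exact Fin.ext (show i + (x.val - i) = x.val by omega)⟩)
        simp [emb, ha, hxw]
      rw [key, emb_apply_in (M * N) ha hb, Matrix.mul_apply]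
      apply Finset.sum_congr rfl
      intro c _
      have hc : i ≤ i + c.val ∧ i + c.val < i + k := by omega
      rw [emb_apply_in M ha hc, emb_apply_in N hc hb]
      congr 2 <;> exact Fin.ext (by simp)
    · rw [Finset.sum_eq_zero, emb_apply_mixed (M * N) ha hb]
      intro c _
      by_cases hc : i ≤ c.val ∧ c.val < i + k
      · rw [emb_apply_mixed N hc hb, mul_zero]
      · rw [emb_apply_mixed M ha hc, zero_mul]
  · have h1 : ∀ c, emb n i k M a c = if a = c then 1 else 0 := fun c => emb_apply_out M ha c
    simp only [h1, ite_mul, one_mul, zero_mul]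
    rw [Finset.sum_ite_eq]
    simp [emb_apply_out N ha, emb_apply_out (M * N) ha]

def gmat (n i k j l : ℕ) (M : Matrix (Fin k) (Fin k) R) (N : Matrix (Fin l) (Fin l) R) :
    Matrix (Fin n) (Fin n) R := fun a b =>
  if ha : i ≤ a.val ∧ a.val < i + k then
    if hb : i ≤ b.val ∧ b.val < i + k then M ⟨a.val - i, by omega⟩ ⟨b.val - i, by omega⟩ else 0
  else if ha2 : j ≤ a.val ∧ a.val < j + l then
    if hb2 : j ≤ b.val ∧ b.val < j + l then N ⟨a.val - j, by omega⟩ ⟨b.val - j, by omega⟩ else 0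
  else if a = b then 1 else 0

theorem mul_eq_gmat (n i k j l : ℕ) (hd : i + k ≤ j ∨ j + l ≤ i)
    (M : Matrix (Fin k) (Fin k) R) (N : Matrix (Fin l) (Fin l) R) :
    emb n i k M * emb n j l N = gmat n i k j l M N := by
  ext a b
  rw [Matrix.mul_apply]
  by_cases ha : i ≤ a.val ∧ a.val < i + k
  · have ha2 : ¬ (j ≤ a.val ∧ a.val < j + l) := by omega
    by_cases hb : i ≤ b.val ∧ b.val < i + k
    · have hb2 : ¬ (j ≤ b.val ∧ b.val < j + l) := by omega
      rw [show gmat n i k j l M N a b = M ⟨a.val - i, by omega⟩ ⟨b.val - i, by omega⟩ by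
        simp [gmat, ha, hb]]
      rw [Finset.sum_eq_single b]
      · rw [emb_apply_in M ha hb, emb_apply_out N (by omega) b, if_pos rfl, mul_one]
      · intro c _ hcb
        by_cases hc : i ≤ c.val ∧ c.val < i + k
        · rw [emb_apply_out N (by omega) b, if_neg hcb, mul_zero]
        · rw [emb_apply_mixed M ha hc, zero_mul]
      · simp
    · rw [show gmat n i k j l M N a b = 0 by simp [gmat, ha, hb]]
      apply Finset.sum_eq_zero
      intro c _
      by_cases hc : i ≤ c.val ∧ c.val < i + k
      · rw [emb_apply_out N (by omega) b, if_neg (by rintro rfl; exact hb hc), mul_zero]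
      · rw [emb_apply_mixed M ha hc, zero_mul]
  · have h1 : ∀ c, emb n i k M a c = if a = c then 1 else 0 := fun c => emb_apply_out M ha c
    simp only [h1, ite_mul, one_mul, zero_mul]
    rw [Finset.sum_ite_eq]
    simp only [Finset.mem_univ, if_pos]
    by_cases ha2 : j ≤ a.val ∧ a.val < j + l
    · by_cases hb2 : j ≤ b.val ∧ b.val < j + l
      · rw [emb_apply_in N ha2 hb2]; simp [gmat, ha, ha2, hb2]
      · rw [emb_apply_mixed N ha2 hb2]; simp [gmat, ha, ha2, hb2]
    · rw [emb_apply_out N ha2 b]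
      simp only [gmat, dif_neg ha, dif_neg ha2]

theorem gmat_comm (n i k j l : ℕ) (hd : i + k ≤ j ∨ j + l ≤ i)
    (M : Matrix (Fin k) (Fin k) R) (N : Matrix (Fin l) (Fin l) R) :
    gmat n i k j l M N = gmat n j l i k N M := by
  ext a b
  simp only [gmat]
  split_ifs <;> first | rfl | omega

theorem emb_comm (n i k j l : ℕ) (hd : i + k ≤ j ∨ j + l ≤ i)
    (M : Matrix (Fin k) (Fin k) R) (N : Matrix (Fin l) (Fin l) R) :
    emb n i k M * emb n j l N = emb n j l N * emb n i k M := by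
  rw [mul_eq_gmat n i k j l hd, mul_eq_gmat n j l i k (by omega), gmat_comm n i k j l hd]

theorem emb_nest (n i k j l : ℕ) (hjl : j + l ≤ k) (M : Matrix (Fin l) (Fin l) R) :
    emb n i k (emb k j l M) = emb n (i + j) l M := by
  ext a b
  simp only [emb, Fin.ext_iff]
  split_ifs <;> first | rfl | omega | (congr 2 <;> omega)

theorem emb_two_apply (n i : ℕ) (M : Matrix (Fin 2) (Fin 2) R) (a b : Fin n) :
    emb n i 2 M a b =
      if a.val = i ∧ b.val = i then M 0 0
      else if a.val = i ∧ b.val = i + 1 then M 0 1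
      else if a.val = i + 1 ∧ b.val = i then M 1 0
      else if a.val = i + 1 ∧ b.val = i + 1 then M 1 1
      else if a = b then 1 else 0 := by
  simp only [emb]
  split_ifs with h1 h2 h3 h4 h5 h6 h7 h8 h9 h10 h11 <;>
    first
      | rfl
      | omega
      | (congr 1 <;> first | (exact Fin.ext (by simp; omega)) | (simp [Fin.ext_iff] <;> omega))
      | (simp_all [Fin.ext_iff] <;> omega)

/-! ### The 2×2 blocks -/

def Sm (t : R) : Matrix (Fin 2) (Fin 2) R := !![1 - t, t; 1, 0]
def Wm (a b : R) : Matrix (Fin 2) (Fin 2) R := !![0, a; b, 0]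
def Smi (t ti : R) : Matrix (Fin 2) (Fin 2) R := !![0, 1; ti, 1 - ti]

theorem Sm_mul_Smi (t ti : R) (h : t * ti = 1) : Sm t * Smi t ti = 1 := by
  ext x y
  fin_cases x <;> fin_cases y <;>
    simp [Sm, Smi, Matrix.mul_apply, Fin.sum_univ_two] <;>
    (try ring) <;>
    ((try ring_nf); simp [h, (show ti * t = 1 by linear_combination h), mul_comm, mul_left_comm, mul_assoc])

theorem Smi_mul_Sm (t ti : R) (h : t * ti = 1) : Smi t ti * Sm t = 1 := by
  ext x y
  fin_cases x <;> fin_cases y <;>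
    simp [Sm, Smi, Matrix.mul_apply, Fin.sum_univ_two] <;>
    (try ring) <;>
    ((try ring_nf); simp [h, (show ti * t = 1 by linear_combination h), mul_comm, mul_left_comm, mul_assoc])

theorem Wm_sq (a b : R) (h : a * b = 1) : Wm a b * Wm a b = 1 := by
  ext x y
  fin_cases x <;> fin_cases y <;>
    simp [Wm, Matrix.mul_apply, Fin.sum_univ_two] <;>
    (try ring) <;>
    ((try ring_nf); simp [h, (show b * a = 1 by linear_combination h), mul_comm, mul_left_comm, mul_assoc])

theorem emb_lo3 (M : Matrix (Fin 2) (Fin 2) R) :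
    emb 3 0 2 M = !![M 0 0, M 0 1, 0; M 1 0, M 1 1, 0; 0, 0, 1] := by
  ext x y
  fin_cases x <;> fin_cases y <;> simp [emb, Matrix.vecHead, Matrix.vecTail]

theorem emb_hi3 (M : Matrix (Fin 2) (Fin 2) R) :
    emb 3 1 2 M = !![1, 0, 0; 0, M 0 0, M 0 1; 0, M 1 0, M 1 1] := by
  ext x y
  fin_cases x <;> fin_cases y <;> simp [emb, Matrix.vecHead, Matrix.vecTail]

theorem braid3 (X : Matrix (Fin 2) (Fin 2) R)
    (hX : X = Sm (X 0 1) ∨ X = Wm (X 0 1) (X 1 0)) :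
    emb 3 0 2 X * emb 3 1 2 X * emb 3 0 2 X
      = emb 3 1 2 X * emb 3 0 2 X * emb 3 1 2 X := by
  rw [emb_lo3, emb_hi3]
  rcases hX with h | h <;> rw [h] <;> ext x y <;>
    fin_cases x <;> fin_cases y <;>
      simp [Sm, Wm, Matrix.mul_apply, Fin.sum_univ_three, Matrix.vecHead, Matrix.vecTail] <;> ring

theorem mixp3 (a b : R) (Y : Matrix (Fin 2) (Fin 2) R)
    (hY : Y = Sm (Y 0 1) ∨ Y = Wm (Y 0 1) (Y 1 0)) :
    emb 3 0 2 (Wm a b) * emb 3 1 2 (Wm a b) * emb 3 0 2 Y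
      = emb 3 1 2 Y * emb 3 0 2 (Wm a b) * emb 3 1 2 (Wm a b) := by
  rw [emb_lo3, emb_hi3, emb_lo3, emb_hi3]
  rcases hY with h | h <;> rw [h] <;> ext x y <;>
    fin_cases x <;> fin_cases y <;>
      simp [Sm, Wm, Matrix.mul_apply, Fin.sum_univ_three, Matrix.vecHead, Matrix.vecTail] <;> ring

theorem mixm3 (a b : R) (Y : Matrix (Fin 2) (Fin 2) R)
    (hY : Y = Sm (Y 0 1) ∨ Y = Wm (Y 0 1) (Y 1 0)) :
    emb 3 1 2 (Wm a b) * emb 3 0 2 (Wm a b) * emb 3 1 2 Y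
      = emb 3 0 2 Y * emb 3 1 2 (Wm a b) * emb 3 0 2 (Wm a b) := by
  rw [emb_lo3, emb_hi3, emb_lo3, emb_hi3]
  rcases hY with h | h <;> rw [h] <;> ext x y <;>
    fin_cases x <;> fin_cases y <;>
      simp [Sm, Wm, Matrix.mul_apply, Fin.sum_univ_three, Matrix.vecHead, Matrix.vecTail] <;> ring

theorem three_case (n m : ℕ) (h3 : m + 3 ≤ n) (X Y : Matrix (Fin 2) (Fin 2) R)
    (hid : emb 3 0 2 X * emb 3 1 2 X * emb 3 0 2 Y = emb 3 1 2 Y * emb 3 0 2 X * emb 3 1 2 X) :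
    emb n m 2 X * emb n (m+1) 2 X * emb n m 2 Y
      = emb n (m+1) 2 Y * emb n m 2 X * emb n (m+1) 2 X := by
  have lo : ∀ Z : Matrix (Fin 2) (Fin 2) R, emb n m 2 Z = emb n m 3 (emb 3 0 2 Z) :=
    fun Z => by rw [emb_nest n m 3 0 2 (by omega)]; rfl
  have hi : ∀ Z : Matrix (Fin 2) (Fin 2) R, emb n (m+1) 2 Z = emb n m 3 (emb 3 1 2 Z) :=
    fun Z => by rw [emb_nest n m 3 1 2 (by omega)]
  rw [lo X, hi X, lo Y, hi Y, emb_mul n m 3 h3, emb_mul n m 3 h3, emb_mul n m 3 h3,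
    emb_mul n m 3 h3, hid]

theorem three_case' (n m : ℕ) (h3 : m + 3 ≤ n) (X Y : Matrix (Fin 2) (Fin 2) R)
    (hid : emb 3 1 2 X * emb 3 0 2 X * emb 3 1 2 Y = emb 3 0 2 Y * emb 3 1 2 X * emb 3 0 2 X) :
    emb n (m+1) 2 X * emb n m 2 X * emb n (m+1) 2 Y
      = emb n m 2 Y * emb n (m+1) 2 X * emb n m 2 X := by
  have lo : ∀ Z : Matrix (Fin 2) (Fin 2) R, emb n m 2 Z = emb n m 3 (emb 3 0 2 Z) :=
    fun Z => by rw [emb_nest n m 3 0 2 (by omega)]; rfl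
  have hi : ∀ Z : Matrix (Fin 2) (Fin 2) R, emb n (m+1) 2 Z = emb n m 3 (emb 3 1 2 Z) :=
    fun Z => by rw [emb_nest n m 3 1 2 (by omega)]
  rw [lo X, hi X, lo Y, hi Y, emb_mul n m 3 h3, emb_mul n m 3 h3, emb_mul n m 3 h3,
    emb_mul n m 3 h3, hid]

end Stmt18Aux

namespace Stmt18Aux2
open Stmt18Aux
variable {R : Type*} [CommRing R]

def sU (n : ℕ) (t : Rˣ) (i : ℕ) (h : i + 2 ≤ n) : (Matrix (Fin n) (Fin n) R)ˣ where
  val := emb n i 2 (Sm (t : R))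
  inv := emb n i 2 (Smi (t : R) ((t⁻¹ : Rˣ) : R))
  val_inv := by rw [emb_mul n i 2 h, Sm_mul_Smi _ _ (Units.mul_inv t), emb_one]
  inv_val := by rw [emb_mul n i 2 h, Smi_mul_Sm _ _ (Units.mul_inv t), emb_one]

def wU (n : ℕ) (u : Rˣ) (i : ℕ) (h : i + 2 ≤ n) : (Matrix (Fin n) (Fin n) R)ˣ where
  val := emb n i 2 (Wm (u : R) ((u⁻¹ : Rˣ) : R))
  inv := emb n i 2 (Wm (u : R) ((u⁻¹ : Rˣ) : R))
  val_inv := by rw [emb_mul n i 2 h, Wm_sq _ _ (Units.mul_inv u), emb_one]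
  inv_val := by rw [emb_mul n i 2 h, Wm_sq _ _ (Units.mul_inv u), emb_one]

def gidx {n : ℕ} : FVBGen n → ℕ
  | .sigma i => i
  | .pi i => i
  | .tau i => i

def gblk {n : ℕ} (t s r : Rˣ) : FVBGen n → Matrix (Fin 2) (Fin 2) R
  | .sigma _ => Sm (t : R)
  | .pi _ => Wm (s : R) ((s⁻¹ : Rˣ) : R)
  | .tau _ => Wm (r : R) ((r⁻¹ : Rˣ) : R)

def gU (n : ℕ) (t s r : Rˣ) : FVBGen n → (Matrix (Fin n) (Fin n) R)ˣ
  | .sigma i => sU n t i (by have := i.isLt; omega)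
  | .pi i => wU n s i (by have := i.isLt; omega)
  | .tau i => wU n r i (by have := i.isLt; omega)

theorem gU_val (n : ℕ) (t s r : Rˣ) (g : FVBGen n) :
    (gU n t s r g : Matrix (Fin n) (Fin n) R) = emb n (gidx g) 2 (gblk t s r g) := by
  cases g <;> rfl

theorem Sm_hX (c : R) : Sm c = Sm ((Sm c) 0 1) ∨ Sm c = Wm ((Sm c) 0 1) ((Sm c) 1 0) :=
  Or.inl (by simp [Sm])

theorem Wm_hX (a b : R) :
    Wm a b = Sm ((Wm a b) 0 1) ∨ Wm a b = Wm ((Wm a b) 0 1) ((Wm a b) 1 0) :=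
  Or.inr (by simp [Wm])

theorem lift_comm (n : ℕ) (t s r : Rˣ) (g1 g2 : FVBGen n)
    (hd : gidx g1 + 2 ≤ gidx g2 ∨ gidx g2 + 2 ≤ gidx g1) :
    FreeGroup.lift (gU n t s r (R := R))
      (.of g1 * .of g2 * (.of g1)⁻¹ * (.of g2)⁻¹) = 1 := by
  have hc : gU n t s r g1 * gU n t s r g2 = gU n t s r g2 * gU n t s r g1 := by
    refine Units.ext ?_
    simp only [Units.val_mul, gU_val]
    exact emb_comm n (gidx g1) 2 (gidx g2) 2 hd _ _
  simp only [map_mul, map_inv, FreeGroup.lift_apply_of]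
  rw [hc]
  group

theorem Smat_eq (n : ℕ) (t : Rˣ) (i : ℕ) :
    Smat n R t i = emb n i 2 (Sm (t : R)) := by
  ext a b
  rw [emb_two_apply]
  simp [Smat, Sm, Matrix.vecHead, Matrix.vecTail]

theorem Pmat_eq (n : ℕ) (s : Rˣ) (i : ℕ) :
    Pmat n R s i = emb n i 2 (Wm (s : R) ((s⁻¹ : Rˣ) : R)) := by
  ext a b
  rw [emb_two_apply]
  simp [Pmat, Wm, Matrix.vecHead, Matrix.vecTail]

theorem Vmat_eq (n : ℕ) (r : Rˣ) (i : ℕ) :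
    Vmat n R r i = emb n i 2 (Wm (r : R) ((r⁻¹ : Rˣ) : R)) := by
  ext a b
  rw [emb_two_apply]
  simp [Vmat, Wm, Matrix.vecHead, Matrix.vecTail]

end Stmt18Aux2

open Stmt18Aux Stmt18Aux2 in
theorem stmt_18 (n : ℕ) (hn : 3 ≤ n) (R : Type*) [CommRing R] (t s r : Rˣ) :
    ∃ ρ : PresentedGroup (FVBRels n) →* (Matrix (Fin n) (Fin n) R)ˣ,
      ∀ i : Fin (n - 1),
        ((ρ (PresentedGroup.of (FVBGen.sigma i)) : Matrix (Fin n) (Fin n) R)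
            = Smat n R t (i : ℕ)) ∧
        ((ρ (PresentedGroup.of (FVBGen.pi i)) : Matrix (Fin n) (Fin n) R)
            = Pmat n R s (i : ℕ)) ∧
        ((ρ (PresentedGroup.of (FVBGen.tau i)) : Matrix (Fin n) (Fin n) R)
            = Vmat n R r (i : ℕ)) := by
  have hrel : ∀ w ∈ FVBRels n, FreeGroup.lift (gU n t s r (R := R)) w = 1 := by
    intro w hw
    simp only [FVBRels, Set.mem_setOf_eq] at hw
    rcases hw with ⟨i, j, hij, x, y, hx, hy, hw⟩ | ⟨i, j, hj, x, hx, hw⟩ |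
      ⟨i, hw⟩ | ⟨i, j, hij, x, y, hx, hy, hw⟩
    · -- distant commutation
      have hd : (i : ℕ) + 2 ≤ (j : ℕ) ∨ (j : ℕ) + 2 ≤ (i : ℕ) := by
        rcases lt_abs.mp hij with h | h <;> omega
      rcases hx with rfl | rfl | rfl <;> rcases hy with rfl | rfl | rfl <;> subst hw <;>
        exact lift_comm n t s r _ _ hd
    · -- braid relations
      have hb : (i : ℕ) + 3 ≤ n := by have := j.isLt; omega
      rcases hx with rfl | rfl <;> subst hw <;>
        · simp only [map_mul, map_inv, FreeGroup.lift_apply_of]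
          rw [mul_inv_eq_one]
          refine Units.ext ?_
          simp only [Units.val_mul, gU_val, gidx, gblk]
          rw [hj]
          first
            | exact three_case n i hb _ _ (braid3 _ (Sm_hX _))
            | exact three_case n i hb _ _ (braid3 _ (Wm_hX _ _))
    · -- involutions
      have hb : (i : ℕ) + 2 ≤ n := by have := i.isLt; omega
      rcases hw with rfl | rfl <;>
        · simp only [map_mul, FreeGroup.lift_apply_of]
          refine Units.ext ?_
          simp only [Units.val_mul, gU_val, gidx, gblk, Units.val_one]
          first
            | rw [emb_mul n i 2 hb, Wm_sq _ _ (Units.mul_inv s), emb_one]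
            | rw [emb_mul n i 2 hb, Wm_sq _ _ (Units.mul_inv r), emb_one]
    · -- mixed relations
      have horient : (j : ℕ) = (i : ℕ) + 1 ∨ (i : ℕ) = (j : ℕ) + 1 := by
        rcases (abs_eq (by norm_num : (0:ℤ) ≤ 1)).mp hij with h | h <;> omega
      have hbi : (i : ℕ) < n - 1 := i.isLt
      have hbj : (j : ℕ) < n - 1 := j.isLt
      rcases hx with rfl | rfl <;> rcases hy with rfl | rfl <;> subst hw <;>
        · simp only [map_mul, map_inv, FreeGroup.lift_apply_of]
          rw [mul_inv_eq_one]
          refine Units.ext ?_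
          simp only [Units.val_mul, gU_val, gidx, gblk]
          rcases horient with hj | hi
          · rw [hj]
            first
              | exact three_case n i (by omega) _ _ (mixp3 _ _ _ (Sm_hX _))
              | exact three_case n i (by omega) _ _ (mixp3 _ _ _ (Wm_hX _ _))
          · rw [hi]
            first
              | exact three_case' n j (by omega) _ _ (mixm3 _ _ _ (Sm_hX _))
              | exact three_case' n j (by omega) _ _ (mixm3 _ _ _ (Wm_hX _ _))
  refine ⟨PresentedGroup.toGroup hrel, fun i => ⟨?_, ?_, ?_⟩⟩ <;>
    rw [PresentedGroup.toGroup.of, gU_val]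
  · exact (Smat_eq n t i).symm
  · exact (Pmat_eq n s i).symm
  · exact (Vmat_eq n r i).symm
end
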